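/- Let t₁,…,t_r be indeterminates and Δ₀(t) = ∏_{1≤i<j≤r}(t_j − t_i) the Vandermonde determinant. Then σ₊(t₁)X^0 ∧ σ₊(t₂)X^0 ∧ ⋯ ∧ σ₊(t_r)X^0 = Δ₀(t) · ∑_{λ ∈ 𝒫_r} X^r(λ) s_λ(t₁,…,t_r) in ⋀^r ℚ[X]⟦t₁,…,t_r⟧, where s_λ is the Schur polynomial and the sum is over partitions of length at most r. Equivalently, the formal series 𝐗(t_r) ∧ ⋯ ∧ 𝐗(t₁) with 𝐗(z) = ∑_{i≥0}X^i z^i is divisible by Δ₀(t) with quotient having coefficients the Schur polynomials. -/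

import Mathlib

noncomputable section

/-- `V = ℚ[X]`. -/
abbrev V : Type := ℕ →₀ ℚ

abbrev A : Type := ExteriorAlgebra ℚ V

def Xp (i : ℕ) : A := ExteriorAlgebra.ι ℚ (Finsupp.single i 1)

/-- `X^r(λ) = X^{r−1+λ₁} ∧ ⋯ ∧ X^{λ_r}`. -/
def Xr (r : ℕ) (l : Fin r → ℕ) : A :=
  ((List.finRange r).map fun k : Fin r => Xp (r - 1 - k.val + l k)).prod

/-- `𝐗(t_i) = σ₊(t_i)X^0 = ∑_{n≥0} X^n t_i^n`, as an element of `⋀V⟦t₁,…,t_r⟧`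
(an `MvPowerSeries` with coefficients in `⋀V`): its coefficient at a monomial `d`
is `X^{d(i)}` if `d` is supported at `i`, and `0` otherwise. -/
def F (r : ℕ) (i : Fin r) : MvPowerSeries (Fin r) A :=
  (fun d => if d = Finsupp.single i (d i) then Xp (d i) else 0 : MvPowerSeries (Fin r) A)

/-- The finite set of partitions (antitone tuples) of length ≤ r with all parts ≤ N. -/
def partFinset (r N : ℕ) : Finset (Fin r → ℕ) :=
  (Fintype.piFinset fun _ : Fin r => Finset.range (N + 1)).filter
    fun l => ∀ i j : Fin r, i ≤ j → l j ≤ l i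

/-- The Jacobi bialternant `det(t_i^{λ_j + r − j})_{1≤i,j≤r} = Δ₀(t)·s_λ(t₁,…,t_r)`,
where `s_λ` is the Schur polynomial and `Δ₀(t) = ∏_{i<j}(t_j − t_i)`. -/
def bialt (r : ℕ) (l : Fin r → ℕ) : MvPolynomial (Fin r) ℚ :=
  Matrix.det (Matrix.of fun i j : Fin r =>
    (MvPolynomial.X i : MvPolynomial (Fin r) ℚ) ^ (l j + (r - 1 - (j : ℕ))))

def fA (r : ℕ) (n : Fin r → ℕ) : A :=
  ((List.finRange r).map fun k : Fin r => Xp (n k)).prod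

def eE (r : ℕ) (l : Fin r → ℕ) : Fin r → ℕ := fun k => r - 1 - k.val + l k

lemma Xr_eq (r : ℕ) (l : Fin r → ℕ) : Xr r l = fA r (eE r l) := rfl

lemma fA_eq_iMulti (r : ℕ) (n : Fin r → ℕ) :
    fA r n = ExteriorAlgebra.ιMulti ℚ r (fun k => Finsupp.single (n k) 1) := by
  rw [ExteriorAlgebra.ιMulti_apply, List.ofFn_eq_map]; rfl

lemma fA_perm (r : ℕ) (n : Fin r → ℕ) (σ : Equiv.Perm (Fin r)) :
    fA r (n ∘ σ) = Equiv.Perm.sign σ • fA r n := by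
  rw [fA_eq_iMulti, fA_eq_iMulti]
  exact (ExteriorAlgebra.ιMulti ℚ r).map_perm (fun k => Finsupp.single (n k) 1) σ

lemma fA_zero (r : ℕ) (n : Fin r → ℕ) (h : ¬ Function.Injective n) : fA r n = 0 := by
  rw [fA_eq_iMulti]
  apply AlternatingMap.map_eq_zero_of_not_injective
  intro hv
  exact h fun a b hab => hv (by simp [hab])

lemma coeff_F_prod (r : ℕ) (L : List (Fin r)) (hL : L.Nodup) (d : Fin r →₀ ℕ) :
    MvPowerSeries.coeff (R := A) d ((L.map (F r)).prod) =
      if d.support ⊆ L.toFinset then (L.map fun i => Xp (d i)).prod else 0 := by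
  induction L generalizing d with
  | nil =>
    simp only [List.map_nil, List.prod_nil, List.toFinset_nil]
    rw [MvPowerSeries.coeff_one]
    by_cases h : d = 0
    · subst h; simp
    · rw [if_neg h, if_neg]
      rw [Finset.subset_empty, Finsupp.support_eq_empty]
      exact h
  | cons i L' ih =>
    have hiL : i ∉ L' := (List.nodup_cons.1 hL).1
    have hL' : L'.Nodup := (List.nodup_cons.1 hL).2
    simp only [List.map_cons, List.prod_cons]
    rw [MvPowerSeries.coeff_mul]
    set u₀ : Fin r →₀ ℕ := Finsupp.single i (d i) with hu₀
    have hu₀le : u₀ ≤ d := by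
      intro j
      rcases eq_or_ne j i with rfl | hji
      · simp [hu₀]
      · simp [hu₀, Finsupp.single_apply, (Ne.symm hji)]
    set v₀ : Fin r →₀ ℕ := d - u₀ with hv₀
    have hsum : u₀ + v₀ = d := add_tsub_cancel_of_le hu₀le
    have hv₀app : ∀ j, v₀ j = if j = i then 0 else d j := by
      intro j
      rcases eq_or_ne j i with rfl | hji
      · simp [hv₀, hu₀, Finsupp.tsub_apply]
      · simp [hv₀, hu₀, Finsupp.tsub_apply, Finsupp.single_apply, Ne.symm hji, hji]
    rw [Finset.sum_eq_single_of_mem (u₀, v₀) (Finset.HasAntidiagonal.mem_antidiagonal.2 hsum)]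
    · have hcu : MvPowerSeries.coeff (R := A) u₀ (F r i) = Xp (d i) := by
        rw [MvPowerSeries.coeff_apply, F]
        simp [hu₀]
      rw [hcu, ih hL' v₀]
      have hiff : v₀.support ⊆ L'.toFinset ↔ d.support ⊆ (i :: L').toFinset := by
        constructor
        · intro hs j hj
          rcases eq_or_ne j i with rfl | hji
          · simp
          · have : j ∈ v₀.support := by
              rw [Finsupp.mem_support_iff, hv₀app j, if_neg hji]
              exact Finsupp.mem_support_iff.1 hj
            simp only [List.toFinset_cons, Finset.mem_insert]
            exact Or.inr (hs this)
        · intro hs j hj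
          rw [Finsupp.mem_support_iff, hv₀app j] at hj
          split_ifs at hj with hji
          · exact absurd rfl hj
          · have := hs (Finsupp.mem_support_iff.2 hj)
            simp only [List.toFinset_cons, Finset.mem_insert] at this
            exact this.resolve_left hji
      have hmapeq : (L'.map fun j => Xp (v₀ j)) = (L'.map fun j => Xp (d j)) := by
        apply List.map_congr_left
        intro j hj
        have hji : j ≠ i := fun h => hiL (h ▸ hj)
        rw [hv₀app j, if_neg hji]
      by_cases hc : d.support ⊆ (i :: L').toFinset
      · rw [if_pos hc, if_pos (hiff.2 hc), hmapeq]
      · rw [if_neg hc, if_neg (fun h => hc (hiff.1 h)), mul_zero]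
    · rintro ⟨u, v⟩ hmem hne
      rw [Finset.HasAntidiagonal.mem_antidiagonal] at hmem
      rw [MvPowerSeries.coeff_apply, F]
      dsimp only
      split_ifs with hu
      · -- u = single i (u i)
        rcases eq_or_ne (u i) (d i) with he | he
        · exfalso
          apply hne
          have : u = u₀ := by rw [hu, he]
          have hv : v = v₀ := by
            rw [hv₀, ← hmem, this, hu₀]
            ext j
            simp [Finsupp.tsub_apply]
          rw [this, hv]
        · have hule : u i ≤ d i := by
            have := DFunLike.congr_fun hmem i
            simp only [Finsupp.coe_add, Pi.add_apply] at this
            omega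
          have hvi : v i ≠ 0 := by
            have := DFunLike.congr_fun hmem i
            simp only [Finsupp.coe_add, Pi.add_apply] at this
            omega
          rw [ih hL' v, if_neg, mul_zero]
          intro hs
          have := hs (Finsupp.mem_support_iff.2 hvi)
          rw [List.mem_toFinset] at this
          exact hiL this
      · rw [zero_mul]

lemma coeff_wedge (r : ℕ) (d : Fin r →₀ ℕ) :
    MvPowerSeries.coeff (R := A) d (((List.finRange r).map (F r)).prod) = fA r ⇑d := by
  rw [coeff_F_prod r _ (List.nodup_finRange r) d, if_pos]
  · rfl
  · rw [List.toFinset_finRange]; exact Finset.subset_univ _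

/-- The monomial exponent contributed by permutation `σ` in the determinant. -/
def Dls (r : ℕ) (l : Fin r → ℕ) (σ : Equiv.Perm (Fin r)) : Fin r →₀ ℕ :=
  Finsupp.equivFunOnFinite.symm (fun j => eE r l (σ⁻¹ j))

lemma coeff_bialt (r : ℕ) (l : Fin r → ℕ) (d : Fin r →₀ ℕ) :
    MvPolynomial.coeff d (bialt r l) =
      ∑ σ : Equiv.Perm (Fin r),
        (Equiv.Perm.sign σ : ℤ) • (if Dls r l σ = d then (1 : ℚ) else 0) := by
  rw [bialt, Matrix.det_apply]
  rw [MvPolynomial.coeff_sum]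
  apply Finset.sum_congr rfl
  intro σ _
  have hprod : (∏ x : Fin r, (Matrix.of fun i j : Fin r =>
      (MvPolynomial.X i : MvPolynomial (Fin r) ℚ) ^ (l j + (r - 1 - (j : ℕ)))) (σ x) x) =
      MvPolynomial.monomial (Dls r l σ) (1 : ℚ) := by
    have h1 : ∀ x : Fin r, (Matrix.of fun i j : Fin r =>
        (MvPolynomial.X i : MvPolynomial (Fin r) ℚ) ^ (l j + (r - 1 - (j : ℕ)))) (σ x) x =
        (fun j => (MvPolynomial.X j : MvPolynomial (Fin r) ℚ) ^ (Dls r l σ j)) (σ x) := by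
      intro x
      simp only [Matrix.of_apply, Dls, Finsupp.coe_equivFunOnFinite_symm,
        Equiv.Perm.inv_def, Equiv.symm_apply_apply]
      rw [eE]
      ring_nf
    calc (∏ x : Fin r, (Matrix.of fun i j : Fin r =>
          (MvPolynomial.X i : MvPolynomial (Fin r) ℚ) ^ (l j + (r - 1 - (j : ℕ)))) (σ x) x)
        = ∏ x : Fin r, (fun j => (MvPolynomial.X j : MvPolynomial (Fin r) ℚ) ^ (Dls r l σ j)) (σ x) := by
          exact Finset.prod_congr rfl fun x _ => h1 x
      _ = ∏ j : Fin r, (MvPolynomial.X j : MvPolynomial (Fin r) ℚ) ^ (Dls r l σ j) :=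
          Fintype.prod_bijective σ σ.bijective _ _ (fun x => rfl)
      _ = MvPolynomial.monomial (Dls r l σ) (1 : ℚ) := by
          rw [← MvPolynomial.prod_X_pow_eq_monomial]
          refine (Finset.prod_subset (Finset.subset_univ _) ?_).symm
          intro x _ hx
          rw [Finsupp.notMem_support_iff.1 hx, pow_zero]
  rw [hprod, MvPolynomial.coeff_smul, MvPolynomial.coeff_monomial, Units.smul_def]


lemma Dls_apply (r : ℕ) (l : Fin r → ℕ) (σ : Equiv.Perm (Fin r)) (j : Fin r) :
    Dls r l σ j = eE r l (σ⁻¹ j) := by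
  simp [Dls]

lemma strictMono_gap {r : ℕ} {g : Fin r → ℕ} (hg : StrictMono g) :
    ∀ (k : ℕ) (a b : Fin r), (a : ℕ) + k = (b : ℕ) → g a + k ≤ g b := by
  intro k
  induction k with
  | zero =>
    intro a b h
    have : a = b := Fin.ext (by omega)
    subst this; omega
  | succ n ihn =>
    intro a b h
    have hb : (b : ℕ) - 1 < r := by omega
    have h1 : g a + n ≤ g ⟨(b : ℕ) - 1, hb⟩ := ihn a _ (by simp; omega)
    have h2 : g ⟨(b : ℕ) - 1, hb⟩ < g b := hg (by rw [Fin.lt_def]; simp; omega)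
    omega

lemma strictMono_le {r : ℕ} {g : Fin r → ℕ} (hg : StrictMono g) (b : Fin r) : (b : ℕ) ≤ g b := by
  have h0 : (0 : ℕ) < r := b.pos
  have := strictMono_gap hg (b : ℕ) ⟨0, h0⟩ b (by simp)
  omega

lemma eE_strictAnti {r : ℕ} {l : Fin r → ℕ} (hl : ∀ i j : Fin r, i ≤ j → l j ≤ l i) :
    StrictAnti (eE r l) := by
  intro i j hij
  have h1 := hl i j hij.le
  have hj : (j : ℕ) < r := j.isLt
  have hij' : (i : ℕ) < (j : ℕ) := hij
  simp only [eE]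
  omega

lemma pair_unique {r : ℕ} {l l' : Fin r → ℕ}
    (hl : ∀ i j : Fin r, i ≤ j → l j ≤ l i) (hl' : ∀ i j : Fin r, i ≤ j → l' j ≤ l' i)
    {σ σ' : Equiv.Perm (Fin r)}
    (h : ∀ j, eE r l (σ⁻¹ j) = eE r l' (σ'⁻¹ j)) : l = l' ∧ σ = σ' := by
  have hA := eE_strictAnti hl
  have hA' := eE_strictAnti hl'
  set π : Equiv.Perm (Fin r) := σ.trans σ'.symm with hπ
  have hcomp : ∀ k, eE r l k = eE r l' (π k) := by
    intro k
    have := h (σ k)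
    simpa [hπ] using this
  have hπmono : StrictMono ⇑π := by
    intro a b hab
    have h1 : eE r l b < eE r l a := hA hab
    rw [hcomp a, hcomp b] at h1
    exact hA'.lt_iff_gt.1 h1
  have hid : ⇑π = id := (hπmono.range_inj strictMono_id).1
      (π.surjective.range_eq.trans Set.range_id.symm)
  have hσ : σ = σ' := by
    ext k
    have h3 : σ'.symm (σ k) = k := congrFun hid k
    have h4 := congrArg σ' h3
    rw [Equiv.apply_symm_apply] at h4
    exact congrArg Fin.val h4
  refine ⟨funext fun k => ?_, hσ⟩
  have h2 := hcomp k
  rw [congrFun hid k] at h2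
  simp only [eE, id_eq] at h2
  omega

lemma le_dsum {r : ℕ} (d : Fin r →₀ ℕ) (i : Fin r) : d i ≤ d.sum fun _ n => n := by
  rcases eq_or_ne (d i) 0 with h | h
  · simp [h]
  · exact Finset.single_le_sum (fun _ _ => Nat.zero_le _) (Finsupp.mem_support_iff.2 h)

/-- `σ₊(t₁)X^0 ∧ σ₊(t₂)X^0 ∧ ⋯ ∧ σ₊(t_r)X^0 = Δ₀(t)·∑_{λ∈𝒫_r} X^r(λ) s_λ(t₁,…,t_r)`,
stated coefficientwise: the coefficient of a monomial `d` of the wedge product equals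
`∑_λ (coefficient of `d` in `Δ₀·s_λ = det(t_i^{λ_j+r−j})`) • X^r(λ)`, the sum being over
the (finitely many contributing) partitions with parts bounded by the degree of `d`. -/
theorem wedge_generating_function (r : ℕ) :
    ∀ d : Fin r →₀ ℕ,
      MvPowerSeries.coeff (R := A) d (((List.finRange r).map (F r)).prod) =
        ∑ l ∈ partFinset r (d.sum fun _ n => n),
          (MvPolynomial.coeff d (bialt r l)) • Xr r l := by
  intro d
  rw [coeff_wedge]
  by_cases hinj : Function.Injective ⇑d
  · -- injective case
    set τ := Tuple.sort ⇑d with hτ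
    have hg : StrictMono (⇑d ∘ ⇑τ) :=
      (Tuple.monotone_sort ⇑d).strictMono_of_injective (hinj.comp τ.injective)
    set σ₀ : Equiv.Perm (Fin r) := Fin.revPerm.trans τ with hσ₀
    set m : Fin r → ℕ := fun k => d (τ (Fin.rev k)) with hm
    have hms : ∀ k, m k = d (σ₀ k) := fun k => rfl
    have hmge : ∀ k : Fin r, r - 1 - (k : ℕ) ≤ m k := by
      intro k
      have h1 := strictMono_le hg (Fin.rev k)
      have hk : (k : ℕ) < r := k.isLt
      simp only [Function.comp_apply, Fin.val_rev] at h1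
      show r - 1 - (k : ℕ) ≤ d (τ (Fin.rev k))
      omega
    set l₀ : Fin r → ℕ := fun k => m k - (r - 1 - (k : ℕ)) with hl₀
    have heE : eE r l₀ = m := by
      funext k
      have := hmge k
      simp only [eE, hl₀]
      omega
    have hl₀ant : ∀ i j : Fin r, i ≤ j → l₀ j ≤ l₀ i := by
      intro i j hij
      have hij' : (i : ℕ) ≤ (j : ℕ) := hij
      have hi : (i : ℕ) < r := i.isLt
      have hj : (j : ℕ) < r := j.isLt
      have haval : ((Fin.rev j : Fin r) : ℕ) = r - ((j : ℕ) + 1) := Fin.val_rev j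
      have hbval : ((Fin.rev i : Fin r) : ℕ) = r - ((i : ℕ) + 1) := Fin.val_rev i
      have hab : ((Fin.rev j : Fin r) : ℕ) + (((Fin.rev i : Fin r) : ℕ) - ((Fin.rev j : Fin r) : ℕ))
          = ((Fin.rev i : Fin r) : ℕ) := by omega
      have h1 := strictMono_gap hg _ (Fin.rev j) (Fin.rev i) hab
      have h2 := strictMono_le hg (Fin.rev j)
      simp only [Function.comp_apply, Fin.val_rev] at h1 h2
      show d (τ (Fin.rev j)) - (r - 1 - (j : ℕ)) ≤ d (τ (Fin.rev i)) - (r - 1 - (i : ℕ))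
      omega
    have hmem : l₀ ∈ partFinset r (d.sum fun _ n => n) := by
      rw [partFinset, Finset.mem_filter]
      refine ⟨Fintype.mem_piFinset.2 fun k => Finset.mem_range.2 ?_, hl₀ant⟩
      have h1 : l₀ k ≤ m k := Nat.sub_le _ _
      have h2 : m k ≤ d.sum fun _ n => n := le_dsum d _
      omega
    have hDd : Dls r l₀ σ₀ = d := by
      ext j
      rw [Dls_apply, heE, hms, Equiv.Perm.inv_def, Equiv.apply_symm_apply]
    rw [Finset.sum_eq_single_of_mem l₀ hmem]
    · rw [coeff_bialt]
      rw [Finset.sum_eq_single σ₀]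
      · rw [if_pos hDd, Xr_eq, heE, funext hms,
          show (fun x => d (σ₀ x)) = ⇑d ∘ ⇑σ₀ from rfl, fA_perm]
        rcases Int.units_eq_one_or (Equiv.Perm.sign σ₀) with h1 | h1 <;> rw [h1] <;>
          simp [Units.smul_def]
      · intro σ _ hσne
        rw [if_neg, smul_zero]
        intro hD
        apply hσne
        have hpt : ∀ j, eE r l₀ (σ⁻¹ j) = eE r l₀ (σ₀⁻¹ j) := by
          intro j
          have e1 := DFunLike.congr_fun (hD.trans hDd.symm) j
          rwa [Dls_apply, Dls_apply] at e1
        exact (pair_unique hl₀ant hl₀ant hpt).2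
      · intro h; exact absurd (Finset.mem_univ σ₀) h
    · intro l hl hne
      have hlant : ∀ i j : Fin r, i ≤ j → l j ≤ l i := (Finset.mem_filter.1 hl).2
      have : MvPolynomial.coeff d (bialt r l) = 0 := by
        rw [coeff_bialt]
        apply Finset.sum_eq_zero
        intro σ _
        rw [if_neg, smul_zero]
        intro hD
        apply hne
        have hpt : ∀ j, eE r l (σ⁻¹ j) = eE r l₀ (σ₀⁻¹ j) := by
          intro j
          have e1 := DFunLike.congr_fun (hD.trans hDd.symm) j
          rwa [Dls_apply, Dls_apply] at e1
        exact (pair_unique hlant hl₀ant hpt).1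
      rw [this, zero_smul]
  · -- non-injective case
    rw [fA_zero r ⇑d hinj]
    symm
    apply Finset.sum_eq_zero
    intro l hl
    have hlant : ∀ i j : Fin r, i ≤ j → l j ≤ l i := (Finset.mem_filter.1 hl).2
    have : MvPolynomial.coeff d (bialt r l) = 0 := by
      rw [coeff_bialt]
      apply Finset.sum_eq_zero
      intro σ _
      rw [if_neg, smul_zero]
      intro hD
      apply hinj
      have hco : ⇑d = fun j => eE r l (σ⁻¹ j) := by
        funext j
        rw [← hD, Dls_apply]
      rw [hco]
      exact ((eE_strictAnti hlant).injective).comp σ⁻¹.injective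
    rw [this, zero_smul]
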